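/- arXiv:2410.20524 — 3 statements merged into one kernel-verified Lean document; each statement's English description precedes it below -/
import Mathlib

section
/- Let B be a skew left brace, n a natural number, and J, I₁, …, Iₙ pairwise distinct minimal ideals of B. Then J*(I₁+⋯+Iₙ) = {0} and (I₁+⋯+Iₙ)*J = {0}, where I₁+⋯+Iₙ denotes the additive subgroup of (B,+) generated by I₁ ∪ ⋯ ∪ Iₙ. -/
/-- A *skew left brace* is a set with two group structures `(B,+)` and `(B,∘)`
(the latter written multiplicatively) satisfying `a∘(b+c) = a∘b - a + a∘c`.
The two identity elements automatically coincide. -/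
class SkewLeftBrace (B : Type*) extends AddGroup B, Group B where
  mul_add_eq : ∀ a b c : B, a * (b + c) = a * b - a + a * c

namespace SkewLeftBrace

variable {B : Type*} [SkewLeftBrace B]

/-- The map `λ_a : b ↦ -a + a∘b`. -/
def lmap (a b : B) : B := -a + a * b

/-- The brace star operation `a*b := -a + a∘b - b`. -/
def bstar (a b : B) : B := -a + a * b - b

/-- `X*Y`: the additive subgroup generated by all `bstar x y`, `x ∈ X`, `y ∈ Y`,
regarded as a set. -/
def setStar (X Y : Set B) : Set B :=
  ↑(AddSubgroup.closure {z : B | ∃ x ∈ X, ∃ y ∈ Y, z = bstar x y})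

/-- Pointwise sum of two subsets. -/
def setSum (X Y : Set B) : Set B := {w : B | ∃ x ∈ X, ∃ y ∈ Y, w = x + y}

/-- `X^Z := {z + x - z : x ∈ X, z ∈ Z}`. -/
def setConj (X Z : Set B) : Set B := {w : B | ∃ x ∈ X, ∃ z ∈ Z, w = z + x + -z}

/-- An ideal of a skew left brace: a subgroup of `(B,+)` which is normal in both
`(B,+)` and `(B,∘)` and invariant under all the maps `λ_a`. -/
structure IsIdeal (I : Set B) : Prop where
  zero_mem : (0 : B) ∈ I
  add_mem : ∀ ⦃x y : B⦄, x ∈ I → y ∈ I → x + y ∈ I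
  neg_mem : ∀ ⦃x : B⦄, x ∈ I → -x ∈ I
  add_conj_mem : ∀ (b : B) ⦃x : B⦄, x ∈ I → b + x + -b ∈ I
  mul_mem : ∀ ⦃x y : B⦄, x ∈ I → y ∈ I → x * y ∈ I
  inv_mem : ∀ ⦃x : B⦄, x ∈ I → x⁻¹ ∈ I
  mul_conj_mem : ∀ (b : B) ⦃x : B⦄, x ∈ I → b * x * b⁻¹ ∈ I
  lmap_mem : ∀ (a : B) ⦃x : B⦄, x ∈ I → lmap a x ∈ I

/-- A minimal ideal: a nonzero ideal whose only sub-ideals are `{0}` and itself. -/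
def IsMinimalIdeal (I : Set B) : Prop :=
  IsIdeal I ∧ I ≠ {0} ∧ ∀ J : Set B, IsIdeal J → J ⊆ I → J = {0} ∨ J = I

theorem mul_zero' (a : B) : a * (0 : B) = a := by
  have h := SkewLeftBrace.mul_add_eq a (0 : B) (0 : B)
  rw [add_zero] at h
  have h2 : a * (0:B) - a = 0 := (right_eq_add.mp h)
  exact sub_eq_zero.mp h2

theorem zero_eq_one : (0 : B) = 1 := by
  have h := mul_zero' (1 : B)
  rw [one_mul] at h
  exact h

theorem IsIdeal.one_mem {I : Set B} (h : IsIdeal I) : (1 : B) ∈ I :=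
  (zero_eq_one (B := B)) ▸ h.zero_mem

variable (B) in
/-- A skew left brace is *semiprime* if `I*I ≠ {0}` for every nonzero ideal `I`. -/
def Semiprime : Prop := ∀ I : Set B, IsIdeal I → I ≠ {0} → setStar I I ≠ {0}

variable (B) in
/-- A skew left brace is *prime*... (and) *simple* if its only ideals are `{0}` and `B`,
and these are distinct. -/
def Simple : Prop :=
  ({0} : Set B) ≠ Set.univ ∧ ∀ I : Set B, IsIdeal I → I = {0} ∨ I = Set.univ

variable (B) in
/-- A skew left brace is *Artinian* if every descending chain of ideals stabilizes. -/
def Artinian : Prop :=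
  ∀ f : ℕ → Set B, (∀ n, IsIdeal (f n)) → (∀ n, f (n + 1) ⊆ f n) →
    ∃ N, ∀ n, N ≤ n → f n = f N

/-- The `*`-products of copies of a fixed set `I`. -/
inductive IsStarPowerOf (I : Set B) : Set B → Prop
  | base : IsStarPowerOf I I
  | star {X Y : Set B} : IsStarPowerOf I X → IsStarPowerOf I Y →
      IsStarPowerOf I (setStar X Y)

variable (B) in
/-- A skew left brace is *strongly semiprime* if for every nonzero ideal `I`, every
`*`-product of copies of `I` is nonzero. -/
def StronglySemiprime : Prop :=
  ∀ I : Set B, IsIdeal I → I ≠ {0} → ∀ X : Set B, IsStarPowerOf I X → X ≠ {0}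

/-- The `*`-products of nonzero ideals. -/
inductive IsStarProdOfNonzeroIdeals : Set B → Prop
  | ideal {I : Set B} : IsIdeal I → I ≠ {0} → IsStarProdOfNonzeroIdeals I
  | star {X Y : Set B} : IsStarProdOfNonzeroIdeals X → IsStarProdOfNonzeroIdeals Y →
      IsStarProdOfNonzeroIdeals (setStar X Y)

variable (B) in
/-- A skew left brace is *strongly prime* if every `*`-product of nonzero ideals is nonzero. -/
def StronglyPrime : Prop :=
  ∀ X : Set B, IsStarProdOfNonzeroIdeals X → X ≠ {0}

end SkewLeftBrace
namespace SkewLeftBrace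

variable {B : Type*} [SkewLeftBrace B]

/-- An ideal, regarded as a skew left brace with the restricted operations. -/
def IsIdeal.brace {I : Set B} (h : IsIdeal I) : SkewLeftBrace I :=
  letI : Zero I := ⟨⟨0, h.zero_mem⟩⟩
  letI : Add I := ⟨fun x y => ⟨x.1 + y.1, h.add_mem x.2 y.2⟩⟩
  letI : Neg I := ⟨fun x => ⟨-x.1, h.neg_mem x.2⟩⟩
  letI : One I := ⟨⟨1, h.one_mem⟩⟩
  letI : Mul I := ⟨fun x y => ⟨x.1 * y.1, h.mul_mem x.2 y.2⟩⟩
  letI : Inv I := ⟨fun x => ⟨x.1⁻¹, h.inv_mem x.2⟩⟩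
  { add := (· + ·)
    zero := 0
    neg := (- ·)
    nsmul := nsmulRec
    zsmul := zsmulRec
    add_assoc := fun a b c => Subtype.ext (add_assoc a.1 b.1 c.1)
    zero_add := fun a => Subtype.ext (zero_add a.1)
    add_zero := fun a => Subtype.ext (add_zero a.1)
    neg_add_cancel := fun a => Subtype.ext (neg_add_cancel a.1)
    mul := (· * ·)
    one := 1
    inv := (·⁻¹)
    npow := npowRec
    zpow := zpowRec
    mul_assoc := fun a b c => Subtype.ext (mul_assoc a.1 b.1 c.1)
    one_mul := fun a => Subtype.ext (one_mul a.1)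
    mul_one := fun a => Subtype.ext (mul_one a.1)
    inv_mul_cancel := fun a => Subtype.ext (inv_mul_cancel a.1)
    mul_add_eq := fun a b c =>
      Subtype.ext (by
        show a.1 * (b.1 + c.1) = a.1 * b.1 + -a.1 + a.1 * c.1
        rw [SkewLeftBrace.mul_add_eq, sub_eq_add_neg]) }

/-- The direct product of two skew left braces, with componentwise operations. -/
def prodBrace (B₁ B₂ : Type*) [SkewLeftBrace B₁] [SkewLeftBrace B₂] :
    SkewLeftBrace (B₁ × B₂) :=
  { (inferInstance : AddGroup (B₁ × B₂)), (inferInstance : Group (B₁ × B₂)) with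
    mul_add_eq := fun a b c =>
      Prod.ext (by simp [SkewLeftBrace.mul_add_eq]) (by simp [SkewLeftBrace.mul_add_eq]) }

/-- Two skew left braces are isomorphic if there is a bijection preserving `+` and `∘`. -/
def IsBraceIsomorphic (A C : Type*) [SkewLeftBrace A] [SkewLeftBrace C] : Prop :=
  ∃ f : A ≃ C, (∀ x y : A, f (x + y) = f x + f y) ∧ (∀ x y : A, f (x * y) = f x * f y)

/-- A group homomorphism from `(B₂,∘)` to the automorphism group `Aut(B₁,+,∘)` of the
skew left brace `B₁`, presented as an action `act : B₂ → B₁ → B₁` by skew left brace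
automorphisms. -/
structure BraceActionHom (B₂ B₁ : Type*) [SkewLeftBrace B₂] [SkewLeftBrace B₁] where
  act : B₂ → B₁ → B₁
  act_bijective : ∀ a : B₂, Function.Bijective (act a)
  act_add : ∀ (a : B₂) (x y : B₁), act a (x + y) = act a x + act a y
  act_mul : ∀ (a : B₂) (x y : B₁), act a (x * y) = act a x * act a y
  act_hom : ∀ (a b : B₂) (x : B₁), act (a * b) x = act a (act b x)
  act_one : ∀ x : B₁, act (1 : B₂) x = x

variable {B₁ B₂ : Type*} [SkewLeftBrace B₁] [SkewLeftBrace B₂]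

theorem BraceActionHom.act_one' (α : BraceActionHom B₂ B₁) (a : B₂) :
    α.act a (1 : B₁) = 1 := by
  have h := α.act_mul a 1 1
  rw [mul_one] at h
  exact mul_eq_left.mp h.symm

/-- The underlying type of the semidirect product of two skew left braces. -/
@[ext]
structure SDP (B₁ B₂ : Type*) where
  fst : B₁
  snd : B₂

/-- The semidirect product `B₁ ⋊_α B₂` of skew left braces: the additive group is the
direct product, while `(a₁,a₂) ∘ (b₁,b₂) = (a₁ ∘ α_{a₂}(b₁), a₂ ∘ b₂)`. -/
def BraceActionHom.sdp (α : BraceActionHom B₂ B₁) : SkewLeftBrace (SDP B₁ B₂) :=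
  letI : Zero (SDP B₁ B₂) := ⟨⟨0, 0⟩⟩
  letI : Add (SDP B₁ B₂) := ⟨fun p q => ⟨p.fst + q.fst, p.snd + q.snd⟩⟩
  letI : Neg (SDP B₁ B₂) := ⟨fun p => ⟨-p.fst, -p.snd⟩⟩
  letI : One (SDP B₁ B₂) := ⟨⟨1, 1⟩⟩
  letI : Mul (SDP B₁ B₂) := ⟨fun p q => ⟨p.fst * α.act p.snd q.fst, p.snd * q.snd⟩⟩
  letI : Inv (SDP B₁ B₂) := ⟨fun p => ⟨α.act p.snd⁻¹ p.fst⁻¹, p.snd⁻¹⟩⟩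
  { add := (· + ·)
    zero := 0
    neg := (- ·)
    nsmul := nsmulRec
    zsmul := zsmulRec
    add_assoc := fun a b c =>
      SDP.ext (add_assoc a.fst b.fst c.fst) (add_assoc a.snd b.snd c.snd)
    zero_add := fun a => SDP.ext (zero_add a.fst) (zero_add a.snd)
    add_zero := fun a => SDP.ext (add_zero a.fst) (add_zero a.snd)
    neg_add_cancel := fun a => SDP.ext (neg_add_cancel a.fst) (neg_add_cancel a.snd)
    mul := (· * ·)
    one := 1
    inv := (·⁻¹)
    npow := npowRec
    zpow := zpowRec
    mul_assoc := fun a b c =>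
      SDP.ext
        (by show (a.fst * α.act a.snd b.fst) * α.act (a.snd * b.snd) c.fst =
              a.fst * α.act a.snd (b.fst * α.act b.snd c.fst)
            rw [α.act_hom, α.act_mul, mul_assoc])
        (mul_assoc a.snd b.snd c.snd)
    one_mul := fun a =>
      SDP.ext (by show (1 : B₁) * α.act 1 a.fst = a.fst; rw [α.act_one, one_mul])
        (one_mul a.snd)
    mul_one := fun a =>
      SDP.ext (by show a.fst * α.act a.snd (1 : B₁) = a.fst; rw [α.act_one', mul_one])
        (mul_one a.snd)
    inv_mul_cancel := fun a =>
      SDP.ext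
        (by show α.act a.snd⁻¹ a.fst⁻¹ * α.act a.snd⁻¹ a.fst = 1
            rw [← α.act_mul, inv_mul_cancel, α.act_one'])
        (inv_mul_cancel a.snd)
    mul_add_eq := fun a b c =>
      SDP.ext
        (by show a.fst * α.act a.snd (b.fst + c.fst) =
              a.fst * α.act a.snd b.fst + -a.fst + a.fst * α.act a.snd c.fst
            rw [α.act_add, SkewLeftBrace.mul_add_eq, sub_eq_add_neg])
        (by show a.snd * (b.snd + c.snd) = a.snd * b.snd + -a.snd + a.snd * c.snd
            rw [SkewLeftBrace.mul_add_eq, sub_eq_add_neg]) }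

end SkewLeftBrace

open SkewLeftBrace

namespace SkewLeftBrace

variable {B : Type*} [SkewLeftBrace B]

theorem lmap_add' (a b c : B) : lmap a (b + c) = lmap a b + lmap a c := by
  unfold lmap
  rw [mul_add_eq]
  simp only [sub_eq_add_neg, add_assoc]

theorem lmap_zero' (a : B) : lmap a 0 = 0 := by
  unfold lmap
  rw [mul_zero', neg_add_cancel]

theorem lmap_neg' (a b : B) : lmap a (-b) = -lmap a b := by
  have h : lmap a b + lmap a (-b) = 0 := by
    rw [← lmap_add', add_neg_cancel, lmap_zero']
  exact (neg_eq_of_add_eq_zero_right h).symm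

theorem mul_eq_add_lmap (a b : B) : a * b = a + lmap a b := by
  unfold lmap; rw [add_neg_cancel_left]

theorem lmap_one' (c : B) : lmap (1 : B) c = c := by
  unfold lmap
  rw [one_mul, ← SkewLeftBrace.zero_eq_one, neg_zero, zero_add]

theorem lmap_mul' (a b c : B) : lmap (a * b) c = lmap a (lmap b c) := by
  have h1 : a * (b * c) = a * b + lmap (a * b) c := by
    rw [← mul_assoc]; exact mul_eq_add_lmap _ _
  have h2 : a * (b * c) = a * b + lmap a (lmap b c) := by
    rw [mul_eq_add_lmap a (b * c), mul_eq_add_lmap b c, lmap_add', ← add_assoc,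
      ← mul_eq_add_lmap]
  exact add_left_cancel (h1.symm.trans h2)

theorem lmap_inv_cancel' (a x : B) : lmap a⁻¹ (lmap a x) = x := by
  rw [← lmap_mul', inv_mul_cancel, lmap_one']

theorem lmap_cancel_inv' (a x : B) : lmap a (lmap a⁻¹ x) = x := by
  rw [← lmap_mul', mul_inv_cancel, lmap_one']

theorem bstar_eq (a b : B) : bstar a b = lmap a b - b := rfl

theorem IsIdeal.bstar_mem_right {K : Set B} (h : IsIdeal K) (a : B) {b : B} (hb : b ∈ K) :
    bstar a b ∈ K := by
  rw [bstar_eq, sub_eq_add_neg]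
  exact h.add_mem (h.lmap_mem a hb) (h.neg_mem hb)

theorem IsIdeal.bstar_mem_left {K : Set B} (h : IsIdeal K) {a : B} (b : B) (ha : a ∈ K) :
    bstar a b ∈ K := by
  have hx : b⁻¹ * a * b ∈ K := by
    have := h.mul_conj_mem b⁻¹ ha
    rwa [inv_inv] at this
  have hab : a * b = b + lmap b (b⁻¹ * a * b) := by
    rw [← mul_eq_add_lmap]; group
  have he : bstar a b = -a + (b + lmap b (b⁻¹ * a * b) + -b) := by
    show -a + a * b - b = _
    rw [hab, sub_eq_add_neg, add_assoc]
  rw [he]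
  exact h.add_mem (h.neg_mem ha) (h.add_conj_mem b (h.lmap_mem b hx))

theorem IsIdeal.inter' {I₁ I₂ : Set B} (h₁ : IsIdeal I₁) (h₂ : IsIdeal I₂) :
    IsIdeal (I₁ ∩ I₂) where
  zero_mem := ⟨h₁.zero_mem, h₂.zero_mem⟩
  add_mem := fun _ _ hx hy => ⟨h₁.add_mem hx.1 hy.1, h₂.add_mem hx.2 hy.2⟩
  neg_mem := fun _ hx => ⟨h₁.neg_mem hx.1, h₂.neg_mem hx.2⟩
  add_conj_mem := fun b _ hx => ⟨h₁.add_conj_mem b hx.1, h₂.add_conj_mem b hx.2⟩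
  mul_mem := fun _ _ hx hy => ⟨h₁.mul_mem hx.1 hy.1, h₂.mul_mem hx.2 hy.2⟩
  inv_mem := fun _ hx => ⟨h₁.inv_mem hx.1, h₂.inv_mem hx.2⟩
  mul_conj_mem := fun b _ hx => ⟨h₁.mul_conj_mem b hx.1, h₂.mul_conj_mem b hx.2⟩
  lmap_mem := fun a _ hx => ⟨h₁.lmap_mem a hx.1, h₂.lmap_mem a hx.2⟩

theorem setStar_eq_zero {X Y : Set B}
    (h : ∀ x ∈ X, ∀ y ∈ Y, bstar x y = 0) : setStar X Y = {0} := by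
  have hle : AddSubgroup.closure {z : B | ∃ x ∈ X, ∃ y ∈ Y, z = bstar x y} ≤ ⊥ := by
    rw [AddSubgroup.closure_le]
    rintro z ⟨x, hx, y, hy, rfl⟩
    simp [h x hx y hy]
  have hb := le_bot_iff.mp hle
  unfold setStar
  rw [hb, AddSubgroup.coe_bot]

theorem closure_lmap_fixed {J S : Set B}
    (hneg : ∀ c ∈ S, -c ∈ S)
    (hlm : ∀ (a : B), ∀ c ∈ S, lmap a c ∈ S)
    (hT : ∀ c ∈ S, ∀ y ∈ J, lmap c y = y)
    (hV : ∀ c ∈ S, ∀ y ∈ J, lmap y c = c) :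
    ∀ x ∈ AddSubgroup.closure S, ∀ y ∈ J, lmap x y = y ∧ lmap y x = x := by
  set T : Set B := {u : B | ∀ y ∈ J, lmap u y = y} with hTdef
  have T_zero : (0 : B) ∈ T := by
    intro y hy
    rw [show (0 : B) = 1 from SkewLeftBrace.zero_eq_one, lmap_one']
  have T_mul : ∀ u ∈ T, ∀ v ∈ T, u * v ∈ T := fun u hu v hv y hy => by
    rw [lmap_mul', hv y hy, hu y hy]
  have T_addc : ∀ u ∈ T, ∀ v : B, lmap u⁻¹ v ∈ T → u + v ∈ T := by
    intro u hu v hv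
    have he : u + v = u * lmap u⁻¹ v := by
      rw [mul_eq_add_lmap, lmap_cancel_inv']
    rw [he]
    exact T_mul u hu _ hv
  let W : AddSubgroup B :=
    { carrier := {x : B | ∀ a : B, lmap a x ∈ T ∧ lmap a (-x) ∈ T}
      zero_mem' := by
        intro a
        rw [neg_zero, lmap_zero']
        exact ⟨T_zero, T_zero⟩
      add_mem' := by
        intro x x' hx hx'
        intro a
        constructor
        · rw [lmap_add']
          refine T_addc _ (hx a).1 _ ?_
          rw [← lmap_mul']
          exact (hx' _).1
        · rw [neg_add_rev, lmap_add']
          refine T_addc _ (hx' a).2 _ ?_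
          rw [← lmap_mul']
          exact (hx _).2
      neg_mem' := by
        intro x hx a
        refine ⟨(hx a).2, ?_⟩
        rw [neg_neg]
        exact (hx a).1 }
  have hSW : S ⊆ W := by
    intro c hc a
    exact ⟨hT _ (hlm a c hc), hT _ (hlm a (-c) (hneg c hc))⟩
  have hcl : AddSubgroup.closure S ≤ W := (AddSubgroup.closure_le W).mpr hSW
  let V : AddSubgroup B :=
    { carrier := {x : B | ∀ y ∈ J, lmap y x = x}
      zero_mem' := fun y _ => lmap_zero' y
      add_mem' := by
        intro x x' hx hx' y hy
        rw [lmap_add', hx y hy, hx' y hy]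
      neg_mem' := by
        intro x hx y hy
        rw [lmap_neg', hx y hy] }
  have hclV : AddSubgroup.closure S ≤ V := (AddSubgroup.closure_le V).mpr (fun c hc => hV c hc)
  intro x hx y hy
  refine ⟨?_, hclV hx y hy⟩
  have hxT := (hcl hx 1).1
  rw [lmap_one'] at hxT
  exact hxT y hy

end SkewLeftBrace

/-- If `J, I₁, …, Iₙ` are pairwise distinct minimal ideals of a skew left brace `B`,
then `J*(I₁+⋯+Iₙ) = {0}` and `(I₁+⋯+Iₙ)*J = {0}`. -/
theorem star_with_sum_of_minimal_ideals_eq_zero {B : Type*} [SkewLeftBrace B]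
    (n : ℕ) (J : Set B) (I : Fin n → Set B)
    (hJ : IsMinimalIdeal J) (hI : ∀ k, IsMinimalIdeal (I k))
    (hJI : ∀ k, J ≠ I k) (hII : ∀ k l : Fin n, k ≠ l → I k ≠ I l) :
    setStar J ↑(AddSubgroup.closure (⋃ k, I k)) = {0} ∧
      setStar (↑(AddSubgroup.closure (⋃ k, I k)) : Set B) J = {0} := by
  have hint : ∀ k, J ∩ I k = {0} := by
    intro k
    have hK : IsIdeal (J ∩ I k) := hJ.1.inter' (hI k).1
    rcases hJ.2.2 _ hK Set.inter_subset_left with h0 | hJeq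
    · exact h0
    · exfalso
      have hsub : J ⊆ I k := fun x hx => (hJeq.symm ▸ hx : x ∈ J ∩ I k).2
      rcases (hI k).2.2 J hJ.1 hsub with h0 | hIk
      · exact hJ.2.1 h0
      · exact hJI k hIk
  have hbz : ∀ k, ∀ c ∈ I k, ∀ y ∈ J, bstar c y = 0 ∧ bstar y c = 0 := by
    intro k c hc y hy
    constructor
    · have hm : bstar c y ∈ J ∩ I k :=
        ⟨hJ.1.bstar_mem_right c hy, (hI k).1.bstar_mem_left y hc⟩
      rw [hint k] at hm
      exact hm
    · have hm : bstar y c ∈ J ∩ I k :=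
        ⟨hJ.1.bstar_mem_left c hy, (hI k).1.bstar_mem_right y hc⟩
      rw [hint k] at hm
      exact hm
  set S : Set B := ⋃ k, I k with hS
  have hneg : ∀ c ∈ S, -c ∈ S := by
    intro c hc
    obtain ⟨k, hk⟩ := Set.mem_iUnion.mp hc
    exact Set.mem_iUnion.mpr ⟨k, (hI k).1.neg_mem hk⟩
  have hlm : ∀ (a : B), ∀ c ∈ S, lmap a c ∈ S := by
    intro a c hc
    obtain ⟨k, hk⟩ := Set.mem_iUnion.mp hc
    exact Set.mem_iUnion.mpr ⟨k, (hI k).1.lmap_mem a hk⟩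
  have hT : ∀ c ∈ S, ∀ y ∈ J, lmap c y = y := by
    intro c hc y hy
    obtain ⟨k, hk⟩ := Set.mem_iUnion.mp hc
    have h0 := (hbz k c hk y hy).1
    rwa [bstar_eq, sub_eq_zero] at h0
  have hV : ∀ c ∈ S, ∀ y ∈ J, lmap y c = c := by
    intro c hc y hy
    obtain ⟨k, hk⟩ := Set.mem_iUnion.mp hc
    have h0 := (hbz k c hk y hy).2
    rwa [bstar_eq, sub_eq_zero] at h0
  have key := closure_lmap_fixed hneg hlm hT hV
  constructor
  · apply setStar_eq_zero
    intro x hx y hy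
    have hfix := (key y hy x hx).2
    rw [bstar_eq, hfix, sub_self]
  · apply setStar_eq_zero
    intro x hx y hy
    have hfix := (key x hx y hy).1
    rw [bstar_eq, hfix, sub_self]
end

section
/- Let B be a skew left brace, n > 1 a natural number, and I₁, …, Iₙ pairwise distinct minimal ideals of B. Then for all i₁, j₁ ∈ I₁, …, iₙ, jₙ ∈ Iₙ, the element (i₁+⋯+iₙ)*(j₁+⋯+jₙ) belongs to the set (I₁*I₁) + (I₂*I₂)^{I₁} + (I₃*I₃)^{I₁+I₂} + ⋯ + (Iₙ*Iₙ)^{I₁+⋯+I_{n−1}}. -/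
open SkewLeftBrace

namespace SkewLeftBrace

variable {B : Type*} [SkewLeftBrace B]

theorem aux_mul_eq (a b : B) : a * b = a + bstar a b + b := by
  simp [bstar, sub_eq_add_neg, add_assoc]

theorem aux_inter_ideal {I J : Set B} (hI : IsIdeal I) (hJ : IsIdeal J) :
    IsIdeal (I ∩ J) where
  zero_mem := ⟨hI.zero_mem, hJ.zero_mem⟩
  add_mem := fun _ _ hx hy => ⟨hI.add_mem hx.1 hy.1, hJ.add_mem hx.2 hy.2⟩
  neg_mem := fun _ hx => ⟨hI.neg_mem hx.1, hJ.neg_mem hx.2⟩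
  add_conj_mem := fun b _ hx => ⟨hI.add_conj_mem b hx.1, hJ.add_conj_mem b hx.2⟩
  mul_mem := fun _ _ hx hy => ⟨hI.mul_mem hx.1 hy.1, hJ.mul_mem hx.2 hy.2⟩
  inv_mem := fun _ hx => ⟨hI.inv_mem hx.1, hJ.inv_mem hx.2⟩
  mul_conj_mem := fun b _ hx => ⟨hI.mul_conj_mem b hx.1, hJ.mul_conj_mem b hx.2⟩
  lmap_mem := fun a _ hx => ⟨hI.lmap_mem a hx.1, hJ.lmap_mem a hx.2⟩

theorem aux_min_inter {I J : Set B} (hI : IsMinimalIdeal I) (hJ : IsMinimalIdeal J)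
    (hne : I ≠ J) : ∀ x : B, x ∈ I → x ∈ J → x = 0 := by
  rcases hI.2.2 (I ∩ J) (aux_inter_ideal hI.1 hJ.1) Set.inter_subset_left with h | h
  · intro x hx hx'
    have : x ∈ I ∩ J := ⟨hx, hx'⟩
    rw [h] at this
    exact this
  · have hIJ : I ⊆ J := by rw [← h]; exact Set.inter_subset_right
    rcases hJ.2.2 I hI.1 hIJ with h' | h'
    · exact absurd h' hI.2.1
    · exact absurd h' hne

theorem aux_bstar_mem_left {I : Set B} (h : IsIdeal I) {a : B} (ha : a ∈ I) (b : B) :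
    bstar a b ∈ I := by
  have hc : b⁻¹ * a * b⁻¹⁻¹ ∈ I := h.mul_conj_mem b⁻¹ ha
  rw [inv_inv] at hc
  have hd : lmap b (b⁻¹ * a * b) ∈ I := h.lmap_mem b hc
  have hab : a * b = b + lmap b (b⁻¹ * a * b) := by
    rw [lmap, add_neg_cancel_left]
    group
  have : bstar a b = -a + (b + lmap b (b⁻¹ * a * b) + -b) := by
    rw [bstar, hab, sub_eq_add_neg, add_assoc]
  rw [this]
  exact h.add_mem (h.neg_mem ha) (h.add_conj_mem b hd)

theorem aux_bstar_mem_right {I : Set B} (h : IsIdeal I) (a : B) {b : B} (hb : b ∈ I) :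
    bstar a b ∈ I := by
  have : bstar a b = lmap a b + -b := by rw [bstar, lmap, sub_eq_add_neg]
  rw [this]
  exact h.add_mem (h.lmap_mem a hb) (h.neg_mem hb)

theorem aux_bstar_mem {I : Set B} (h : IsIdeal I) {a b : B} (ha : a ∈ I) (hb : b ∈ I) :
    bstar a b ∈ I := aux_bstar_mem_right h a hb

theorem aux_cross_comm {I J : Set B} (hI : IsIdeal I) (hJ : IsIdeal J)
    (hz : ∀ x : B, x ∈ I → x ∈ J → x = 0) {u v : B} (hu : u ∈ I) (hv : v ∈ J) :
    u + v = v + u := by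
  have hcJ : u + v + -u + -v ∈ J :=
    hJ.add_mem (hJ.add_conj_mem u hv) (hJ.neg_mem hv)
  have hcI : u + v + -u + -v ∈ I := by
    have h2 : v + -u + -v ∈ I := hI.add_conj_mem v (hI.neg_mem hu)
    have := hI.add_mem hu h2
    simpa [add_assoc] using this
  have h0 : u + v + -u + -v = 0 := hz _ hcI hcJ
  have h4 : u + v + -u = v := add_neg_eq_zero.mp h0
  calc u + v = u + v + -u + u := (neg_add_cancel_right _ _).symm
    _ = v + u := by rw [h4]

theorem aux_cross_mul {I J : Set B} (hI : IsIdeal I) (hJ : IsIdeal J)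
    (hz : ∀ x : B, x ∈ I → x ∈ J → x = 0) {u v : B} (hu : u ∈ I) (hv : v ∈ J) :
    u * v = u + v := by
  have h0 : bstar u v = 0 := hz _ (aux_bstar_mem_left hI hu v) (aux_bstar_mem_right hJ u hv)
  have h1 : -u + u * v = v := by
    have := sub_eq_zero.mp (by rw [bstar] at h0; exact h0)
    exact this
  have := congrArg (fun w => u + w) h1
  simpa [add_neg_cancel_left] using this

theorem aux_mul_list_sum (x : B) : ∀ l : List B,
    (∀ v ∈ l, x * v = x + v) → x * l.sum = x + l.sum
  | [], _ => by rw [List.sum_nil, add_zero]; exact mul_zero' x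
  | v :: l, h => by
    rw [List.sum_cons, mul_add_eq, h v (by simp),
      aux_mul_list_sum x l (fun w hw => h w (by simp [hw])), sub_eq_add_neg]
    simp only [add_assoc, neg_add_cancel_left]

theorem aux_add_list_sum_comm (y : B) : ∀ l : List B,
    (∀ w ∈ l, y + w = w + y) → y + l.sum = l.sum + y
  | [], _ => by simp
  | w :: l, h => by
    rw [List.sum_cons, ← add_assoc, h w (by simp), add_assoc,
      aux_add_list_sum_comm y l (fun u hu => h u (by simp [hu])), ← add_assoc]

theorem aux_list_sum_mul (y : B) : ∀ l : List B,
    l.Pairwise (fun u v => u * v = u + v) →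
    (∀ u ∈ l, u * y = u + y) → l.sum * y = l.sum + y
  | [], _, _ => by rw [List.sum_nil, zero_add, zero_eq_one, one_mul]
  | u :: l, hp, h => by
    obtain ⟨hp1, hp2⟩ := List.pairwise_cons.mp hp
    have hsum : u * l.sum = u + l.sum := aux_mul_list_sum u l hp1
    have IH := aux_list_sum_mul y l hp2 (fun v hv => h v (by simp [hv]))
    rw [List.sum_cons, ← hsum, mul_assoc, IH, mul_add_eq, hsum, h u (by simp),
      sub_eq_add_neg]
    simp only [add_assoc, neg_add_cancel_left]

theorem aux_main : ∀ L : List (B × B × Set B),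
    (∀ p ∈ L, IsIdeal p.2.2 ∧ p.1 ∈ p.2.2 ∧ p.2.1 ∈ p.2.2) →
    L.Pairwise (fun p q => ∀ u ∈ p.2.2, ∀ v ∈ q.2.2,
      u * v = u + v ∧ v * u = v + u ∧ u + v = v + u) →
    bstar (L.map (fun p => p.1)).sum (L.map (fun p => p.2.1)).sum
      = (L.map (fun p => bstar p.1 p.2.1)).sum
  | [], _, _ => by
    simp only [List.map_nil, List.sum_nil, bstar, neg_zero, zero_add, sub_zero]
    exact mul_zero' 0
  | p :: L, hmem, hp => by
    obtain ⟨hK, hx, hy⟩ := hmem p (by simp)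
    obtain ⟨hhead, htail⟩ := List.pairwise_cons.mp hp
    set x := p.1 with hxdef
    set y := p.2.1 with hydef
    set S := (L.map (fun p => p.1)).sum with hSdef
    set T := (L.map (fun p => p.2.1)).sum with hTdef
    set Z := (L.map (fun p => bstar p.1 p.2.1)).sum with hZdef
    have IH : bstar S T = Z :=
      aux_main L (fun q hq => hmem q (by simp [hq])) htail
    -- cross facts
    have hxS : x * S = x + S := by
      apply aux_mul_list_sum
      intro v hv
      obtain ⟨q, hq, rfl⟩ := List.mem_map.mp hv
      exact ((hhead q hq) x hx q.1 (hmem q (by simp [hq])).2.1).1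
    have hxT : x * T = x + T := by
      apply aux_mul_list_sum
      intro v hv
      obtain ⟨q, hq, rfl⟩ := List.mem_map.mp hv
      exact ((hhead q hq) x hx q.2.1 (hmem q (by simp [hq])).2.2).1
    have hxZ : x * Z = x + Z := by
      apply aux_mul_list_sum
      intro v hv
      obtain ⟨q, hq, rfl⟩ := List.mem_map.mp hv
      have hqmem := hmem q (by simp [hq])
      exact ((hhead q hq) x hx _ (aux_bstar_mem hqmem.1 hqmem.2.1 hqmem.2.2)).1
    have hSy : S * y = S + y := by
      apply aux_list_sum_mul
      · rw [List.pairwise_map]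
        refine htail.imp_of_mem ?_
        intro q r hq hr hqr
        exact (hqr q.1 (hmem q (by simp [hq])).2.1 r.1 (hmem r (by simp [hr])).2.1).1
      · intro u hu
        obtain ⟨q, hq, rfl⟩ := List.mem_map.mp hu
        exact ((hhead q hq) y hy q.1 (hmem q (by simp [hq])).2.1).2.1
    have hyZ : y + Z = Z + y := by
      apply aux_add_list_sum_comm
      intro w hw
      obtain ⟨q, hq, rfl⟩ := List.mem_map.mp hw
      have hqmem := hmem q (by simp [hq])
      exact ((hhead q hq) y hy _ (aux_bstar_mem hqmem.1 hqmem.2.1 hqmem.2.2)).2.2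
    have hyZ' : Z + -y = -y + Z := by
      have := congrArg (fun w => -y + w + -y) hyZ
      simpa [add_assoc, neg_add_cancel_left, add_neg_cancel_left,
        neg_add_cancel_right] using this
    have hST : S * T = S + (Z + T) := by
      rw [aux_mul_eq S T, IH, add_assoc]
    -- main computation
    simp only [List.map_cons, List.sum_cons]
    simp only [← hxdef, ← hydef, ← hSdef, ← hTdef]
    have step1 : (x + S) * (y + T) = x * (S * (y + T)) := by
      rw [← hxS, mul_assoc]
    have step2 : S * (y + T) = S + (y + (Z + T)) := by
      rw [mul_add_eq, hSy, hST, sub_eq_add_neg]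
      simp only [add_assoc, neg_add_cancel_left, add_neg_cancel_left]
    have step3 : x * (S + (y + (Z + T)))
        = (x + S) + (-x + (x * y + (-x + ((x + Z) + (-x + (x + T)))))) := by
      rw [mul_add_eq x S, hxS, mul_add_eq x y, mul_add_eq x Z, hxZ, hxT]
      simp only [sub_eq_add_neg, add_assoc]
    rw [bstar, step1, step2, step3, sub_eq_add_neg]
    simp only [neg_add_rev, add_assoc, neg_add_cancel_left, add_neg_cancel_left]
    rw [bstar, sub_eq_add_neg]
    simp only [add_assoc]
    rw [← hyZ']

end SkewLeftBrace

/-- For pairwise distinct minimal ideals `I₁, …, Iₙ` (`n > 1`) and elements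
`i_k, j_k ∈ I_k`, the element `(i₁+⋯+iₙ)*(j₁+⋯+jₙ)` lies in
`(I₁*I₁) + (I₂*I₂)^{I₁} + ⋯ + (Iₙ*Iₙ)^{I₁+⋯+I_{n-1}}`. -/
theorem star_of_sums_mem {B : Type*} [SkewLeftBrace B]
    (n : ℕ) (hn : 1 < n) (I : Fin n → Set B)
    (hI : ∀ k, IsMinimalIdeal (I k)) (hII : ∀ k l : Fin n, k ≠ l → I k ≠ I l)
    (i j : Fin n → B) (hi : ∀ k, i k ∈ I k) (hj : ∀ k, j k ∈ I k) :
    ∃ t : Fin n → B,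
      (∀ k, t k ∈ setConj (setStar (I k) (I k))
          (↑(AddSubgroup.closure {b : B | ∃ l : Fin n, l < k ∧ b ∈ I l}) : Set B)) ∧
      bstar (List.ofFn i).sum (List.ofFn j).sum = (List.ofFn t).sum := by
  refine ⟨fun k => bstar (i k) (j k), ?_, ?_⟩
  · intro k
    refine ⟨bstar (i k) (j k), ?_, 0, ?_, by simp⟩
    · exact AddSubgroup.subset_closure ⟨i k, hi k, j k, hj k, rfl⟩
    · exact AddSubgroup.zero_mem _
  · set L : List (B × B × Set B) := List.ofFn (fun k => (i k, j k, I k)) with hL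
    have h1 : List.ofFn i = L.map (fun p => p.1) := by
      rw [hL, List.map_ofFn]; rfl
    have h2 : List.ofFn j = L.map (fun p => p.2.1) := by
      rw [hL, List.map_ofFn]; rfl
    have h3 : List.ofFn (fun k => bstar (i k) (j k))
        = L.map (fun p => bstar p.1 p.2.1) := by
      rw [hL, List.map_ofFn]; rfl
    rw [h1, h2, h3]
    apply aux_main
    · intro p hp
      rw [hL] at hp
      obtain ⟨k, rfl⟩ := List.mem_ofFn.mp hp
      exact ⟨(hI k).1, hi k, hj k⟩
    · rw [hL, List.pairwise_ofFn]
      intro k l hkl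
      intro u hu v hv
      have hne : I k ≠ I l := hII k l (ne_of_lt hkl)
      have hz := aux_min_inter (hI k) (hI l) hne
      have hz' : ∀ x : B, x ∈ I l → x ∈ I k → x = 0 := fun x h1 h2 => hz x h2 h1
      exact ⟨aux_cross_mul (hI k).1 (hI l).1 hz hu hv,
        aux_cross_mul (hI l).1 (hI k).1 hz' hv hu,
        aux_cross_comm (hI k).1 (hI l).1 hz hu hv⟩
end

section
/- Let B₁ and B₂ be strongly semiprime skew left braces and α a group homomorphism from (B₂,∘) to Aut(B₁,+,∘). Then the semidirect product B₁ ⋊_α B₂ is a strongly semiprime skew left brace. -/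
open SkewLeftBrace

namespace SkewLeftBrace

section Hom

variable {A C : Type*} [SkewLeftBrace A] [SkewLeftBrace C]

/-- A map preserving both brace operations. -/
structure IsBraceHom (f : A → C) : Prop where
  map_add' : ∀ x y, f (x + y) = f x + f y
  map_mul' : ∀ x y, f (x * y) = f x * f y

namespace IsBraceHom

variable {f : A → C}

theorem map_zero' (hf : IsBraceHom f) : f 0 = 0 := by
  have h := hf.map_add' 0 0
  rw [add_zero] at h
  have : f 0 + f 0 = f 0 + 0 := by rw [← h, add_zero]
  exact add_left_cancel this

theorem map_neg' (hf : IsBraceHom f) (x : A) : f (-x) = -f x := by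
  have h : f x + f (-x) = 0 := by rw [← hf.map_add', add_neg_cancel, hf.map_zero']
  exact (neg_eq_of_add_eq_zero_right h).symm

theorem map_sub' (hf : IsBraceHom f) (x y : A) : f (x - y) = f x - f y := by
  rw [sub_eq_add_neg, hf.map_add', hf.map_neg', ← sub_eq_add_neg]

theorem map_one' (hf : IsBraceHom f) : f 1 = 1 := by
  have h := hf.map_mul' 1 1
  rw [one_mul] at h
  have : f 1 * f 1 = f 1 * 1 := by rw [← h, mul_one]
  exact mul_left_cancel this

theorem map_inv' (hf : IsBraceHom f) (x : A) : f x⁻¹ = (f x)⁻¹ := by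
  have h : f x * f x⁻¹ = 1 := by rw [← hf.map_mul', mul_inv_cancel, hf.map_one']
  exact (inv_eq_of_mul_eq_one_right h).symm

theorem map_lmap (hf : IsBraceHom f) (a x : A) : f (lmap a x) = lmap (f a) (f x) := by
  unfold lmap
  rw [hf.map_add', hf.map_neg', hf.map_mul']

theorem map_bstar (hf : IsBraceHom f) (x y : A) : f (bstar x y) = bstar (f x) (f y) := by
  unfold bstar
  rw [hf.map_sub', hf.map_add', hf.map_neg', hf.map_mul']

/-- The underlying additive monoid hom. -/
def toAddHom (hf : IsBraceHom f) : A →+ C := AddMonoidHom.mk' f hf.map_add'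

theorem image_setStar (hf : IsBraceHom f) (X Y : Set A) :
    f '' setStar X Y = setStar (f '' X) (f '' Y) := by
  unfold setStar
  have hgen : f '' {z : A | ∃ x ∈ X, ∃ y ∈ Y, z = bstar x y} =
      {z : C | ∃ x ∈ f '' X, ∃ y ∈ f '' Y, z = bstar x y} := by
    ext w
    constructor
    · rintro ⟨z, ⟨x, hx, y, hy, rfl⟩, rfl⟩
      exact ⟨f x, ⟨x, hx, rfl⟩, f y, ⟨y, hy, rfl⟩, hf.map_bstar x y⟩
    · rintro ⟨_, ⟨x, hx, rfl⟩, _, ⟨y, hy, rfl⟩, rfl⟩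
      exact ⟨bstar x y, ⟨x, hx, y, hy, rfl⟩, hf.map_bstar x y⟩
  have h1 : f '' ↑(AddSubgroup.closure {z : A | ∃ x ∈ X, ∃ y ∈ Y, z = bstar x y}) =
      ↑((AddSubgroup.closure {z : A | ∃ x ∈ X, ∃ y ∈ Y, z = bstar x y}).map
        hf.toAddHom) := (AddSubgroup.coe_map hf.toAddHom _).symm
  have h2 : ⇑hf.toAddHom '' {z : A | ∃ x ∈ X, ∃ y ∈ Y, z = bstar x y} =
      {z : C | ∃ x ∈ f '' X, ∃ y ∈ f '' Y, z = bstar x y} := hgen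
  rw [h1, AddMonoidHom.map_closure, h2]

theorem image_ideal (hf : IsBraceHom f) (hs : Function.Surjective f) {I : Set A} (hI : IsIdeal I) :
    IsIdeal (f '' I) where
  zero_mem := ⟨0, hI.zero_mem, hf.map_zero'⟩
  add_mem := by
    rintro _ _ ⟨x, hx, rfl⟩ ⟨y, hy, rfl⟩
    exact ⟨x + y, hI.add_mem hx hy, hf.map_add' x y⟩
  neg_mem := by
    rintro _ ⟨x, hx, rfl⟩
    exact ⟨-x, hI.neg_mem hx, hf.map_neg' x⟩
  add_conj_mem := by
    rintro b _ ⟨x, hx, rfl⟩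
    obtain ⟨c, rfl⟩ := hs b
    exact ⟨c + x + -c, hI.add_conj_mem c hx, by rw [hf.map_add', hf.map_add', hf.map_neg']⟩
  mul_mem := by
    rintro _ _ ⟨x, hx, rfl⟩ ⟨y, hy, rfl⟩
    exact ⟨x * y, hI.mul_mem hx hy, hf.map_mul' x y⟩
  inv_mem := by
    rintro _ ⟨x, hx, rfl⟩
    exact ⟨x⁻¹, hI.inv_mem hx, hf.map_inv' x⟩
  mul_conj_mem := by
    rintro b _ ⟨x, hx, rfl⟩
    obtain ⟨c, rfl⟩ := hs b
    exact ⟨c * x * c⁻¹, hI.mul_conj_mem c hx, by rw [hf.map_mul', hf.map_mul', hf.map_inv']⟩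
  lmap_mem := by
    rintro b _ ⟨x, hx, rfl⟩
    obtain ⟨c, rfl⟩ := hs b
    exact ⟨lmap c x, hI.lmap_mem c hx, hf.map_lmap c x⟩

theorem preimage_ideal (hf : IsBraceHom f) {I : Set C} (hI : IsIdeal I) : IsIdeal (f ⁻¹' I) where
  zero_mem := by
    show f 0 ∈ I
    rw [hf.map_zero']; exact hI.zero_mem
  add_mem := by
    intro x y hx hy
    show f _ ∈ I
    rw [hf.map_add']; exact hI.add_mem hx hy
  neg_mem := by
    intro x hx
    show f _ ∈ I
    rw [hf.map_neg']; exact hI.neg_mem hx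
  add_conj_mem := by
    intro b x hx
    show f _ ∈ I
    rw [hf.map_add', hf.map_add', hf.map_neg']; exact hI.add_conj_mem (f b) hx
  mul_mem := by
    intro x y hx hy
    show f _ ∈ I
    rw [hf.map_mul']; exact hI.mul_mem hx hy
  inv_mem := by
    intro x hx
    show f _ ∈ I
    rw [hf.map_inv']; exact hI.inv_mem hx
  mul_conj_mem := by
    intro b x hx
    show f _ ∈ I
    rw [hf.map_mul', hf.map_mul', hf.map_inv']; exact hI.mul_conj_mem (f b) hx
  lmap_mem := by
    intro a x hx
    show f _ ∈ I
    rw [hf.map_lmap]; exact hI.lmap_mem (f a) hx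

theorem image_starPower (hf : IsBraceHom f) {I X : Set A} (h : IsStarPowerOf I X) :
    IsStarPowerOf (f '' I) (f '' X) := by
  induction h with
  | base => exact .base
  | star _ _ ihX ihY => rw [hf.image_setStar]; exact .star ihX ihY

end IsBraceHom

theorem starPower_zero_mem {I X : Set A} (h0 : (0 : A) ∈ I)
    (h : IsStarPowerOf I X) : (0 : A) ∈ X := by
  induction h with
  | base => exact h0
  | star _ _ _ _ =>
      show (0 : A) ∈ ↑(AddSubgroup.closure _)
      exact AddSubgroup.zero_mem _

theorem transfer_surj {f : A → C} (hf : IsBraceHom f) (hs : Function.Surjective f)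
    (hC : StronglySemiprime C) {I : Set A} (hI : IsIdeal I) (hne : f '' I ≠ {0}) :
    ∀ X : Set A, IsStarPowerOf I X → X ≠ {0} := by
  intro X hX hX0
  apply hC (f '' I) (hf.image_ideal hs hI) hne (f '' X) (hf.image_starPower hX)
  rw [hX0, Set.image_singleton, hf.map_zero']

theorem transfer_inj {f : C → A} (hf : IsBraceHom f) (hinj : Function.Injective f)
    (hC : StronglySemiprime C) {I : Set A} (hI : IsIdeal I) (hsub : I ⊆ Set.range f)
    (hne : I ≠ {0}) : ∀ X : Set A, IsStarPowerOf I X → X ≠ {0} := by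
  have hJ : IsIdeal (f ⁻¹' I) := hf.preimage_ideal hI
  have himg : f '' (f ⁻¹' I) = I := Set.image_preimage_eq_of_subset hsub
  have hJne : f ⁻¹' I ≠ {0} := by
    intro h
    apply hne
    rw [← himg, h, Set.image_singleton, hf.map_zero']
  have key : ∀ X : Set A, IsStarPowerOf I X →
      ∃ X' : Set C, IsStarPowerOf (f ⁻¹' I) X' ∧ f '' X' = X := by
    intro X hX
    induction hX with
    | base => exact ⟨_, .base, himg⟩
    | star _ _ ihA ihB =>
        obtain ⟨XA, hXA, rfl⟩ := ihA
        obtain ⟨XB, hXB, rfl⟩ := ihB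
        exact ⟨_, .star hXA hXB, hf.image_setStar _ _⟩
  intro X hX h0
  obtain ⟨X', hX', rfl⟩ := key X hX
  apply hC _ hJ hJne _ hX'
  have h0mem : (0 : C) ∈ X' := starPower_zero_mem hJ.zero_mem hX'
  apply Set.eq_singleton_iff_unique_mem.mpr
  refine ⟨h0mem, fun x hx => ?_⟩
  have hfx : f x ∈ ({0} : Set A) := h0 ▸ ⟨x, hx, rfl⟩
  have : f x = f 0 := by rw [hf.map_zero']; exact hfx
  exact hinj this

end Hom

end SkewLeftBrace

/-- The semidirect product of strongly semiprime skew left braces is strongly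
semiprime. -/
theorem sdp_stronglySemiprime {B₁ B₂ : Type*} [SkewLeftBrace B₁] [SkewLeftBrace B₂]
    (h₁ : SkewLeftBrace.StronglySemiprime B₁)
    (h₂ : SkewLeftBrace.StronglySemiprime B₂)
    (α : BraceActionHom B₂ B₁) :
    @SkewLeftBrace.StronglySemiprime _ α.sdp := by
  letI inst : SkewLeftBrace (SDP B₁ B₂) := α.sdp
  intro I hI hIne X hX
  have hzero : (0 : SDP B₁ B₂) = ⟨0, 0⟩ := rfl
  have hπhom : IsBraceHom (fun p : SDP B₁ B₂ => p.snd) :=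
    ⟨fun _ _ => rfl, fun _ _ => rfl⟩
  by_cases h2 : (fun p : SDP B₁ B₂ => p.snd) '' I = {0}
  · -- the ideal lives inside `B₁ × {0}`; use the embedding of `B₁`
    have hιhom : IsBraceHom (fun x : B₁ => (⟨x, 0⟩ : SDP B₁ B₂)) := by
      constructor
      · intro x y
        show (⟨x + y, 0⟩ : SDP B₁ B₂) = ⟨x + y, 0 + 0⟩
        exact SDP.ext rfl (add_zero 0).symm
      · intro x y
        show (⟨x * y, 0⟩ : SDP B₁ B₂) = ⟨x * α.act 0 y, 0 * 0⟩
        refine SDP.ext ?_ ?_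
        · rw [show (0 : B₂) = 1 from zero_eq_one, α.act_one]
        · rw [show (0 : B₂) = 1 from zero_eq_one, one_mul]
    have hinj : Function.Injective (fun x : B₁ => (⟨x, 0⟩ : SDP B₁ B₂)) :=
      fun x y h => congrArg SDP.fst h
    have hsub : I ⊆ Set.range (fun x : B₁ => (⟨x, 0⟩ : SDP B₁ B₂)) := by
      intro p hp
      have hmem : p.snd ∈ (fun p : SDP B₁ B₂ => p.snd) '' I := ⟨p, hp, rfl⟩
      rw [h2] at hmem
      exact ⟨p.fst, SDP.ext rfl hmem.symm⟩
    exact transfer_inj hιhom hinj h₁ hI hsub hIne X hX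
  · -- the projection of `I` to `B₂` is nonzero
    have hs : Function.Surjective (fun p : SDP B₁ B₂ => p.snd) :=
      fun b => ⟨⟨0, b⟩, rfl⟩
    exact transfer_surj hπhom hs h₂ hI h2 X hX
end
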